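/- Oracle inequality (basic form): Let ||·||_w be a seminorm on R^{d×d} induced by an inner product ⟨·,·⟩_w, let M ⊆ R^{d×d} be any set of matrices, Σ ∈ R^{d×d}, λ > 0, and let Y: R^{d×d} → R be a functional of the form Y(M) = ||M||_w² − 2⟨Σ, M⟩_w − ⟨R, M⟩ + λ||M||_1 for a fixed error matrix R with ||R||_∞ ≤ λ. If Σ̂ minimizes Y over M, then ||Σ̂ − Σ||_w² ≤ inf_{M ∈ M} { ||M − Σ||_w² + 2λ||M||_1 }. -/

import Mathlib

open Matrix BigOperators

/-- Singular values of a real square matrix. -/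
noncomputable def singularValues {d : ℕ} (A : Matrix (Fin d) (Fin d) ℝ) : Fin d → ℝ :=
  fun i => Real.sqrt ((show (Aᵀ * A).IsHermitian by
    simpa using Matrix.isHermitian_conjTranspose_mul_self A).eigenvalues i)

/-- Nuclear norm: sum of singular values. -/
noncomputable def nuclearNorm {d : ℕ} (A : Matrix (Fin d) (Fin d) ℝ) : ℝ :=
  ∑ i, singularValues A i

/-- Spectral norm: largest singular value. -/
noncomputable def matSpectralNorm {d : ℕ} (A : Matrix (Fin d) (Fin d) ℝ) : ℝ :=
  ⨆ i, singularValues A i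

section aux

variable {d : ℕ}

lemma Matrix.isHermitian_transpose_mul_self {n : Type*} [Fintype n] (A : Matrix n n ℝ) :
    (Aᵀ * A).IsHermitian := by
  simpa using Matrix.isHermitian_conjTranspose_mul_self A

lemma eig_congr {n : Type*} [Fintype n] [DecidableEq n] {A B : Matrix n n ℝ} (h : A = B)
    (hA : A.IsHermitian) (hB : B.IsHermitian) : hA.eigenvalues = hB.eigenvalues := by
  subst h; rfl

lemma sv_nonneg (A : Matrix (Fin d) (Fin d) ℝ) (i : Fin d) : 0 ≤ singularValues A i :=
  Real.sqrt_nonneg _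

lemma nuclearNorm_nonneg (A : Matrix (Fin d) (Fin d) ℝ) : 0 ≤ nuclearNorm A :=
  Finset.sum_nonneg fun i _ => sv_nonneg A i

lemma sv_le_spectral (A : Matrix (Fin d) (Fin d) ℝ) (i : Fin d) :
    singularValues A i ≤ matSpectralNorm A :=
  le_ciSup (Set.Finite.bddAbove (Set.finite_range _)) i

lemma sv_sq (A : Matrix (Fin d) (Fin d) ℝ) (i : Fin d) :
    singularValues A i ^ 2 = (Matrix.isHermitian_transpose_mul_self A).eigenvalues i :=
  Real.sq_sqrt (Matrix.eigenvalues_conjTranspose_mul_self_nonneg A i)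

/-- quadratic form bound by the square of the spectral norm -/
lemma quad_bound (R : Matrix (Fin d) (Fin d) ℝ) (v : Fin d → ℝ) :
    v ⬝ᵥ ((Rᵀ * R) *ᵥ v) ≤ matSpectralNorm R ^ 2 * (v ⬝ᵥ v) := by
  have hB := Matrix.isHermitian_transpose_mul_self R
  set U : Matrix (Fin d) (Fin d) ℝ := (hB.eigenvectorUnitary : Matrix (Fin d) (Fin d) ℝ) with hU
  have h1 : Uᵀ * U = 1 := by
    have := Unitary.coe_star_mul_self hB.eigenvectorUnitary; exact this
  have h2 : U * Uᵀ = 1 := by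
    have := Unitary.coe_mul_star_self hB.eigenvectorUnitary; exact this
  set c := Uᵀ *ᵥ v with hc
  have hv : U *ᵥ c = v := by rw [hc, mulVec_mulVec, h2, one_mulVec]
  have hdiag : Uᵀ * (Rᵀ * R) * U = Matrix.diagonal hB.eigenvalues := by
    have h := hB.conjStarAlgAut_star_eigenvectorUnitary
    rw [Unitary.conjStarAlgAut_star_apply] at h
    rwa [show (RCLike.ofReal ∘ hB.eigenvalues : Fin d → ℝ) = hB.eigenvalues from
      funext fun i => by simp] at h
  have key : ∀ (w : Fin d → ℝ) (M : Matrix (Fin d) (Fin d) ℝ) (x : Fin d → ℝ),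
      w ⬝ᵥ (Mᵀ *ᵥ x) = (M *ᵥ w) ⬝ᵥ x := by
    intro w M x
    rw [dotProduct_mulVec, vecMul_transpose]
  have e1 : v ⬝ᵥ ((Rᵀ * R) *ᵥ v) = c ⬝ᵥ (Matrix.diagonal hB.eigenvalues *ᵥ c) := by
    calc v ⬝ᵥ ((Rᵀ * R) *ᵥ v) = (U *ᵥ c) ⬝ᵥ ((Rᵀ * R) *ᵥ (U *ᵥ c)) := by rw [hv]
      _ = c ⬝ᵥ (Uᵀ *ᵥ ((Rᵀ * R) *ᵥ (U *ᵥ c))) := (key c U _).symm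
      _ = c ⬝ᵥ ((Uᵀ * (Rᵀ * R) * U) *ᵥ c) := by
          rw [mulVec_mulVec, mulVec_mulVec, mul_assoc]
      _ = c ⬝ᵥ (Matrix.diagonal hB.eigenvalues *ᵥ c) := by rw [hdiag]
  have e2 : v ⬝ᵥ v = c ⬝ᵥ c := by
    calc v ⬝ᵥ v = (U *ᵥ c) ⬝ᵥ (U *ᵥ c) := by rw [hv]
      _ = c ⬝ᵥ (Uᵀ *ᵥ (U *ᵥ c)) := (key c U _).symm
      _ = c ⬝ᵥ c := by rw [mulVec_mulVec, h1, one_mulVec]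
  rw [e1, e2]
  have hterm : ∀ i : Fin d, hB.eigenvalues i * c i * c i ≤ matSpectralNorm R ^ 2 * (c i * c i) := by
    intro i
    have h1' : hB.eigenvalues i ≤ matSpectralNorm R ^ 2 := by
      rw [show hB.eigenvalues i = singularValues R i ^ 2 from (sv_sq R i).symm]
      have := sv_le_spectral R i
      exact pow_le_pow_left₀ (sv_nonneg R i) this 2
    have hcc : 0 ≤ c i * c i := mul_self_nonneg _
    calc hB.eigenvalues i * c i * c i = hB.eigenvalues i * (c i * c i) := by ring
      _ ≤ matSpectralNorm R ^ 2 * (c i * c i) := mul_le_mul_of_nonneg_right h1' hcc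
  calc c ⬝ᵥ (Matrix.diagonal hB.eigenvalues *ᵥ c)
      = ∑ i, hB.eigenvalues i * c i * c i := by
        simp [dotProduct, mulVec_diagonal]
        exact Finset.sum_congr rfl fun i _ => by ring
    _ ≤ ∑ i, matSpectralNorm R ^ 2 * (c i * c i) := Finset.sum_le_sum fun i _ => hterm i
    _ = matSpectralNorm R ^ 2 * (c ⬝ᵥ c) := by rw [← Finset.mul_sum]; rfl


lemma nuclearNorm_neg (M : Matrix (Fin d) (Fin d) ℝ) : nuclearNorm (-M) = nuclearNorm M := by
  have h : (-M)ᴴ * (-M) = Mᴴ * M := by simp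
  have he := eig_congr h (Matrix.isHermitian_transpose_mul_self (-M))
    (Matrix.isHermitian_transpose_mul_self M)
  simp [nuclearNorm, singularValues, he]

lemma matSpectralNorm_neg (M : Matrix (Fin d) (Fin d) ℝ) : matSpectralNorm (-M) = matSpectralNorm M := by
  have h : (-M)ᴴ * (-M) = Mᴴ * M := by simp
  have he := eig_congr h (Matrix.isHermitian_transpose_mul_self (-M))
    (Matrix.isHermitian_transpose_mul_self M)
  simp [matSpectralNorm, singularValues, he]

/-- Trace duality: `⟨R, A⟩ ≤ ‖R‖_∞ ‖A‖₁`. -/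
lemma trace_duality (R A : Matrix (Fin d) (Fin d) ℝ) :
    Matrix.trace (Rᵀ * A) ≤ matSpectralNorm R * nuclearNorm A := by
  have hA := Matrix.isHermitian_transpose_mul_self A
  set V : Matrix (Fin d) (Fin d) ℝ := (hA.eigenvectorUnitary : Matrix (Fin d) (Fin d) ℝ) with hV
  have h1 : Vᵀ * V = 1 := by
    have := Unitary.coe_star_mul_self hA.eigenvectorUnitary; exact this
  have h2 : V * Vᵀ = 1 := by
    have := Unitary.coe_mul_star_self hA.eigenvectorUnitary; exact this
  set v : Fin d → Fin d → ℝ := fun i k => V k i with hv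
  have key : ∀ (w : Fin d → ℝ) (M : Matrix (Fin d) (Fin d) ℝ) (x : Fin d → ℝ),
      w ⬝ᵥ (Mᵀ *ᵥ x) = (M *ᵥ w) ⬝ᵥ x := by
    intro w M x
    rw [dotProduct_mulVec, vecMul_transpose]
  have hnorm1 : ∀ i, v i ⬝ᵥ v i = 1 := by
    intro i
    have : (Vᵀ * V) i i = (1 : Matrix (Fin d) (Fin d) ℝ) i i := by rw [h1]
    simpa [Matrix.mul_apply, Matrix.one_apply, dotProduct, hv] using this
  have hbasis : ∀ i, v i = ⇑(hA.eigenvectorBasis i) := by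
    intro i; funext k; exact hA.eigenvectorUnitary_apply k i
  have heig : ∀ i, (Aᵀ * A) *ᵥ v i = hA.eigenvalues i • v i := by
    intro i
    rw [hbasis]
    exact hA.mulVec_eigenvectorBasis i
  -- rewrite the trace as a sum over the eigenbasis
  have step1 : Matrix.trace (Rᵀ * A) = ∑ i, (R *ᵥ v i) ⬝ᵥ (A *ᵥ v i) := by
    have e0 : Matrix.trace (Vᵀ * (Rᵀ * A) * V) = Matrix.trace (Rᵀ * A) := by
      rw [Matrix.trace_mul_cycle, h2, one_mul]
    rw [← e0, Matrix.trace]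
    refine Finset.sum_congr rfl fun i _ => ?_
    have e1 : (Vᵀ * (Rᵀ * A) * V).diag i = v i ⬝ᵥ ((Rᵀ * A) *ᵥ v i) := by
      simp only [Matrix.diag, Matrix.mul_apply, dotProduct, Matrix.mulVec, Matrix.transpose_apply,
        Finset.sum_mul, Finset.mul_sum, hv, dotProduct]
      rw [Finset.sum_comm]
      exact Finset.sum_congr rfl fun j _ => Finset.sum_congr rfl fun k _ =>
        Finset.sum_congr rfl fun l _ => by ring
    rw [e1, ← Matrix.mulVec_mulVec, key]
  rw [step1]
  have hAterm : ∀ i, (A *ᵥ v i) ⬝ᵥ (A *ᵥ v i) = hA.eigenvalues i := by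
    intro i
    rw [← key (v i) A (A *ᵥ v i), Matrix.mulVec_mulVec, heig, dotProduct_smul, smul_eq_mul,
      hnorm1, mul_one]
  have hterm : ∀ i, (R *ᵥ v i) ⬝ᵥ (A *ᵥ v i) ≤ matSpectralNorm R * singularValues A i := by
    intro i
    have cs : (R *ᵥ v i) ⬝ᵥ (A *ᵥ v i) ≤
        Real.sqrt ((R *ᵥ v i) ⬝ᵥ (R *ᵥ v i)) * Real.sqrt ((A *ᵥ v i) ⬝ᵥ (A *ᵥ v i)) := by
      have := Real.sum_mul_le_sqrt_mul_sqrt Finset.univ (R *ᵥ v i) (A *ᵥ v i)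
      simpa [dotProduct, sq] using this
    have hRv : Real.sqrt ((R *ᵥ v i) ⬝ᵥ (R *ᵥ v i)) ≤ matSpectralNorm R := by
      have hq : (R *ᵥ v i) ⬝ᵥ (R *ᵥ v i) ≤ matSpectralNorm R ^ 2 := by
        have : (R *ᵥ v i) ⬝ᵥ (R *ᵥ v i) = v i ⬝ᵥ ((Rᵀ * R) *ᵥ v i) := by
          rw [← Matrix.mulVec_mulVec, key]
        rw [this]
        have := quad_bound R (v i)
        rwa [hnorm1, mul_one] at this
      have hspec : 0 ≤ matSpectralNorm R := le_trans (sv_nonneg R i) (sv_le_spectral R i)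
      calc Real.sqrt ((R *ᵥ v i) ⬝ᵥ (R *ᵥ v i)) ≤ Real.sqrt (matSpectralNorm R ^ 2) :=
            Real.sqrt_le_sqrt hq
        _ = matSpectralNorm R := Real.sqrt_sq hspec
    have hAv : Real.sqrt ((A *ᵥ v i) ⬝ᵥ (A *ᵥ v i)) = singularValues A i := by
      rw [hAterm i]; rfl
    calc (R *ᵥ v i) ⬝ᵥ (A *ᵥ v i) ≤
          Real.sqrt ((R *ᵥ v i) ⬝ᵥ (R *ᵥ v i)) * Real.sqrt ((A *ᵥ v i) ⬝ᵥ (A *ᵥ v i)) := cs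
      _ ≤ matSpectralNorm R * singularValues A i := by
          rw [hAv]
          exact mul_le_mul_of_nonneg_right hRv (sv_nonneg A i)
  calc ∑ i, (R *ᵥ v i) ⬝ᵥ (A *ᵥ v i) ≤ ∑ i, matSpectralNorm R * singularValues A i :=
        Finset.sum_le_sum fun i _ => hterm i
    _ = matSpectralNorm R * nuclearNorm A := by rw [← Finset.mul_sum]; rfl

end aux

/-- Basic oracle inequality: if `Σ̂` minimizes
`Y(M) = ‖M‖_w² − 2⟨Σ,M⟩_w − ⟨R,M⟩ + λ‖M‖₁` over `𝓜`, where `⟨·,·⟩_w` is a symmetric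
positive semi-definite bilinear form and `‖R‖_∞ ≤ λ`, then
`‖Σ̂ − Σ‖_w² ≤ inf_{M ∈ 𝓜} {‖M − Σ‖_w² + 2λ‖M‖₁}`. -/
theorem oracle_inequality_basic {d : ℕ}
    (wip : Matrix (Fin d) (Fin d) ℝ → Matrix (Fin d) (Fin d) ℝ → ℝ)
    (hsymm : ∀ A B, wip A B = wip B A)
    (hadd : ∀ A B C, wip (A + B) C = wip A C + wip B C)
    (hsmul : ∀ (c : ℝ) A B, wip (c • A) B = c * wip A B)
    (hpos : ∀ A, 0 ≤ wip A A)
    (𝓜 : Set (Matrix (Fin d) (Fin d) ℝ))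
    (Sig R : Matrix (Fin d) (Fin d) ℝ)
    (lam : ℝ) (hlam : 0 < lam)
    (hR : matSpectralNorm R ≤ lam)
    (Shat : Matrix (Fin d) (Fin d) ℝ) (hmem : Shat ∈ 𝓜)
    (hmin : ∀ M ∈ 𝓜,
      wip Shat Shat - 2 * wip Sig Shat - Matrix.trace (Rᵀ * Shat) + lam * nuclearNorm Shat ≤
      wip M M - 2 * wip Sig M - Matrix.trace (Rᵀ * M) + lam * nuclearNorm M) :
    ∀ M ∈ 𝓜, wip (Shat - Sig) (Shat - Sig) ≤
      wip (M - Sig) (M - Sig) + 2 * lam * nuclearNorm M := by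
  intro M hM
  have hadd' : ∀ A B C, wip A (B + C) = wip A B + wip A C := fun A B C => by
    rw [hsymm, hadd, hsymm B, hsymm C]
  have hsmul' : ∀ (c : ℝ) A B, wip A (c • B) = c * wip A B := fun c A B => by
    rw [hsymm, hsmul, hsymm]
  have hexp : ∀ X, wip (X - Sig) (X - Sig) = wip X X - 2 * wip Sig X + wip Sig Sig := by
    intro X
    rw [sub_eq_add_neg, ← neg_one_smul ℝ Sig, hadd, hadd', hadd', hsmul, hsmul', hsmul',
      hsymm X Sig, hsmul]
    ring
  -- trace bounds
  have tS : Matrix.trace (Rᵀ * Shat) ≤ lam * nuclearNorm Shat := by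
    calc Matrix.trace (Rᵀ * Shat) ≤ matSpectralNorm R * nuclearNorm Shat := trace_duality R Shat
      _ ≤ lam * nuclearNorm Shat := mul_le_mul_of_nonneg_right hR (nuclearNorm_nonneg Shat)
  have tM : -Matrix.trace (Rᵀ * M) ≤ lam * nuclearNorm M := by
    have h := trace_duality R (-M)
    rw [Matrix.mul_neg, Matrix.trace_neg, nuclearNorm_neg] at h
    calc -Matrix.trace (Rᵀ * M) ≤ matSpectralNorm R * nuclearNorm M := h
      _ ≤ lam * nuclearNorm M := mul_le_mul_of_nonneg_right hR (nuclearNorm_nonneg M)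
  have h1 := hmin M hM
  have hNS : 0 ≤ nuclearNorm Shat := nuclearNorm_nonneg Shat
  rw [hexp Shat, hexp M]
  nlinarith [h1, tS, tM, hlam]
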